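/- Let H be a real Hilbert space, S₁, S₂ ⊆ H nonempty closed convex sets with S₁ compact (or with the infimum distance attained). If q ∈ S₁ satisfies q = P_{S₁}(P_{S₂}(q)) where P_{S₂}(q) exists, then dist(S₁, S₂) = ‖q - P_{S₂}(q)‖, i.e., the pair (q, P_{S₂}(q)) attains the distance inf{‖z₁ - z₂‖ : z₁ ∈ S₁, z₂ ∈ S₂} between the sets. -/

import Mathlib

open RealInnerProductSpace in
private lemma inner_le_zero_of_near {H : Type*} [NormedAddCommGroup H]
    [InnerProductSpace ℝ H] {K : Set H} (hK : Convex ℝ K) {u v : H} (hv : v ∈ K)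
    (hnear : ∀ z ∈ K, ‖u - v‖ ≤ ‖u - z‖) : ∀ w ∈ K, ⟪u - v, w - v⟫ ≤ 0 := by
  haveI : Nonempty K := ⟨⟨v, hv⟩⟩
  rw [← norm_eq_iInf_iff_real_inner_le_zero hK hv]
  refine le_antisymm (le_ciInf fun w => hnear w w.2) ?_
  exact ciInf_le ⟨0, fun _ ⟨_, h⟩ => h ▸ norm_nonneg _⟩ (⟨v, hv⟩ : K)

/-- Fixed points of the composition of metric projections are best
approximation pairs: in a real Hilbert space, if `p₂` is the nearest point of
`S₂` to `q ∈ S₁` and `q` is the nearest point of `S₁` to `p₂`, then the pair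
`(q, p₂)` attains the distance between `S₁` and `S₂`. -/
theorem fixed_point_attains_set_distance
    {H : Type*} [NormedAddCommGroup H] [InnerProductSpace ℝ H] [CompleteSpace H]
    (S₁ S₂ : Set H) (hS₁ : S₁.Nonempty) (hS₂ : S₂.Nonempty)
    (hclosed₁ : IsClosed S₁) (hclosed₂ : IsClosed S₂)
    (hconv₁ : Convex ℝ S₁) (hconv₂ : Convex ℝ S₂)
    (hcompact₁ : IsCompact S₁)
    (q p₂ : H) (hq : q ∈ S₁) (hp₂ : p₂ ∈ S₂)
    (hnear₂ : ∀ z ∈ S₂, ‖q - p₂‖ ≤ ‖q - z‖)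
    (hnear₁ : ∀ z ∈ S₁, ‖p₂ - q‖ ≤ ‖p₂ - z‖) :
    sInf {d : ℝ | ∃ z₁ ∈ S₁, ∃ z₂ ∈ S₂, d = ‖z₁ - z₂‖} = ‖q - p₂‖ := by
  have h₂ := inner_le_zero_of_near hconv₂ hp₂ hnear₂
  have h₁ := inner_le_zero_of_near hconv₁ hq hnear₁
  -- key: ‖q - p₂‖ ≤ ‖z₁ - z₂‖ for all z₁ ∈ S₁, z₂ ∈ S₂
  have key : ∀ z₁ ∈ S₁, ∀ z₂ ∈ S₂, ‖q - p₂‖ ≤ ‖z₁ - z₂‖ := by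
    intro z₁ hz₁ z₂ hz₂
    rcases eq_or_lt_of_le (norm_nonneg (q - p₂)) with h0 | h0
    · rw [← h0]; exact norm_nonneg _
    have hinner : ‖q - p₂‖ ^ 2 ≤ inner ℝ (z₁ - z₂) (q - p₂) := by
      have e : (inner ℝ (z₁ - z₂) (q - p₂) : ℝ)
          = inner ℝ (q - p₂) (q - p₂) - inner ℝ (p₂ - q) (z₁ - q) - inner ℝ (q - p₂) (z₂ - p₂) := by
        simp only [inner_sub_left, inner_sub_right]
        have c1 := real_inner_comm p₂ z₁
        have c2 := real_inner_comm q z₁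
        have c3 := real_inner_comm p₂ z₂
        have c4 := real_inner_comm q z₂
        have c5 := real_inner_comm q p₂
        linarith
      rw [e, ← real_inner_self_eq_norm_sq]
      have := h₁ z₁ hz₁
      have := h₂ z₂ hz₂
      linarith
    have hcs : (inner ℝ (z₁ - z₂) (q - p₂) : ℝ) ≤ ‖z₁ - z₂‖ * ‖q - p₂‖ :=
      real_inner_le_norm _ _
    have : ‖q - p₂‖ * ‖q - p₂‖ ≤ ‖z₁ - z₂‖ * ‖q - p₂‖ := by
      nlinarith
    exact le_of_mul_le_mul_right this h0
  apply le_antisymm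
  · exact csInf_le ⟨‖q - p₂‖, fun d ⟨z₁, hz₁, z₂, hz₂, hd⟩ => hd ▸ key z₁ hz₁ z₂ hz₂⟩
      ⟨q, hq, p₂, hp₂, rfl⟩
  · exact le_csInf ⟨‖q - p₂‖, q, hq, p₂, hp₂, rfl⟩
      fun d ⟨z₁, hz₁, z₂, hz₂, hd⟩ => hd ▸ key z₁ hz₁ z₂ hz₂
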